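/- Fix μ > 0, let t_c ∈ ]-μ, 0[ with cosh(t_c) appearing via α_c = -e^{-μ}/(2μ² cosh t_c), and define, for s ∈ ℝ, F(s) = μ²α_c · 4 sinh²(s/2) · 2e^{μ} cosh(s - μ) + 4 sinh²(s/2). Then F(s) < 0 for all s ∈ ]0, t_c + μ[. -/

import Mathlib

theorem stmt_14 (μ tc α : ℝ) (hμ : 0 < μ)
    (htc : tc ∈ Set.Ioo (-μ) 0)
    (hα : α = -Real.exp (-μ) / (2 * μ ^ 2 * Real.cosh tc))
    (F : ℝ → ℝ)
    (hF : ∀ s, F s = μ ^ 2 * α * (4 * Real.sinh (s / 2) ^ 2) * (2 * Real.exp μ * Real.cosh (s - μ))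
      + 4 * Real.sinh (s / 2) ^ 2) :
    ∀ s ∈ Set.Ioo (0 : ℝ) (tc + μ), F s < 0 := by
  obtain ⟨htc1, htc2⟩ := htc
  intro s hs
  obtain ⟨hs1, hs2⟩ := hs
  have hcosh : 0 < Real.cosh tc := Real.cosh_pos tc
  have hμ2 : (μ : ℝ) ^ 2 ≠ 0 := by positivity
  have hS : 0 < Real.sinh (s / 2) ^ 2 := by
    have : 0 < Real.sinh (s / 2) := Real.sinh_pos_iff.2 (by linarith)
    positivity
  have hC : Real.cosh tc < Real.cosh (s - μ) := by
    rw [Real.cosh_lt_cosh]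
    rw [abs_of_neg htc2, abs_of_neg (by linarith : s - μ < 0)]
    linarith
  have hkey : F s = 4 * Real.sinh (s / 2) ^ 2 *
      (1 - Real.cosh (s - μ) / Real.cosh tc) := by
    rw [hF, hα]
    have he : Real.exp (-μ) * Real.exp μ = 1 := by
      rw [← Real.exp_add]; simp
    field_simp
    linear_combination (-Real.cosh (s - μ)) * he
  rw [hkey]
  have : 1 - Real.cosh (s - μ) / Real.cosh tc < 0 := by
    rw [sub_neg, lt_div_iff₀ hcosh]
    linarith
  nlinarith
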